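/- Let η ∈ (0,1), let σ ≥ 0 and c₁, c₂ ≥ 0 be real numbers, and let K₁, K₂, M, R₁, R₂ be d × d real symmetric matrices such that 0 ⪯ R₁ ⪯ c₁·σ·I, 0 ⪯ R₂ ⪯ c₂·σ·I, K₂ ⪯ M ⪯ K₁, and, with K̃₁ = K₁ + R₁ and K̃₂ = K₂ + R₂, (1 − η)·K̃₁ ⪯ K̃₂. Then M − c₁·σ·I ⪯ K̃₁ ⪯ (1/(1 − η))·M + (c₂/(1 − η))·σ·I. -/

import Mathlib

/-- The Loewner partial order on real square matrices: `M ⪯ N` iff `N - M` is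
positive semidefinite. -/
def LoewnerLE {d : ℕ} (M N : Matrix (Fin d) (Fin d) ℝ) : Prop := (N - M).PosSemidef

lemma psd_smul {d : ℕ} {A : Matrix (Fin d) (Fin d) ℝ} (hA : A.PosSemidef) {c : ℝ}
    (hc : 0 ≤ c) : (c • A).PosSemidef := by
  refine ⟨?_, fun x => ?_⟩
  · unfold Matrix.IsHermitian
    rw [Matrix.conjTranspose_smul, hA.1]
    simp
  · exact (hA.smul hc).2 x

theorem stmt15 (d : ℕ) (η σ c₁ c₂ : ℝ)
    (hη0 : 0 < η) (hη1 : η < 1) (hσ : 0 ≤ σ) (hc₁ : 0 ≤ c₁) (hc₂ : 0 ≤ c₂)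
    (K₁ K₂ M R₁ R₂ : Matrix (Fin d) (Fin d) ℝ)
    (hK₁ : K₁.IsSymm) (hK₂ : K₂.IsSymm) (hM : M.IsSymm) (hR₁ : R₁.IsSymm) (hR₂ : R₂.IsSymm)
    (hR₁psd : R₁.PosSemidef) (hR₁ub : LoewnerLE R₁ ((c₁ * σ) • (1 : Matrix (Fin d) (Fin d) ℝ)))
    (hR₂psd : R₂.PosSemidef) (hR₂ub : LoewnerLE R₂ ((c₂ * σ) • (1 : Matrix (Fin d) (Fin d) ℝ)))
    (hsand₁ : LoewnerLE K₂ M) (hsand₂ : LoewnerLE M K₁)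
    (hhist : LoewnerLE ((1 - η) • (K₁ + R₁)) (K₂ + R₂)) :
    LoewnerLE (M - (c₁ * σ) • (1 : Matrix (Fin d) (Fin d) ℝ)) (K₁ + R₁) ∧
      LoewnerLE (K₁ + R₁)
        ((1 / (1 - η)) • M + (c₂ / (1 - η) * σ) • (1 : Matrix (Fin d) (Fin d) ℝ)) := by
  have h1η : (0:ℝ) < 1 - η := by linarith
  have hI : ((c₁ * σ) • (1 : Matrix (Fin d) (Fin d) ℝ)).PosSemidef :=
    psd_smul Matrix.PosSemidef.one (mul_nonneg hc₁ hσ)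
  constructor
  · have : K₁ + R₁ - (M - (c₁ * σ) • (1 : Matrix (Fin d) (Fin d) ℝ))
        = (K₁ - M) + R₁ + (c₁ * σ) • (1 : Matrix (Fin d) (Fin d) ℝ) := by abel
    rw [LoewnerLE, this]
    exact (hsand₂.add hR₁psd).add hI
  · have key : ((1 / (1 - η)) • M + (c₂ / (1 - η) * σ) • (1 : Matrix (Fin d) (Fin d) ℝ))
        - (K₁ + R₁)
        = (1 / (1 - η)) • ((K₂ + R₂ - (1 - η) • (K₁ + R₁))
            + (M - K₂) + ((c₂ * σ) • (1 : Matrix (Fin d) (Fin d) ℝ) - R₂)) := by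
      have hne : (1 - η) ≠ 0 := ne_of_gt h1η
      ext i j
      simp only [Matrix.sub_apply, Matrix.add_apply, Matrix.smul_apply, smul_eq_mul]
      field_simp
      ring
    rw [LoewnerLE, key]
    exact psd_smul ((hhist.add hsand₁).add hR₂ub) (by positivity)
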